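/- Let α: G → Aut(A) be a tracially amenable action of a discrete group G on a unital C*-algebra A with nonempty trace space. Then G is amenable if and only if A admits a G-invariant tracial state. -/

import Mathlib

noncomputable section

variable {G : Type*} [Group G] {A : Type*} [CStarAlgebra A]

/-- A tracial state on a unital C*-algebra. -/
def IsTracialState (τ : A →ₗ[ℂ] ℂ) : Prop :=
  τ 1 = 1 ∧ (∀ a : A, 0 ≤ (τ (star a * a)).re ∧ (τ (star a * a)).im = 0) ∧
    ∀ a b : A, τ (a * b) = τ (b * a)

/-- The inner product `⟨ξ,η⟩ = ∑_g ξ(g)* η(g)` on `C_c(G,A) ⊆ ℓ²(G,A)`. -/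
def ip (ξ η : G →₀ A) : A := ξ.sum fun g a => star a * η g

/-- The uniform 2-seminorm `‖a‖_{2,u} = sup_{τ ∈ T(A)} τ(a*a)^{1/2}` on `A`. -/
def u2 (a : A) : ℝ :=
  ⨆ τ : {τ : A →ₗ[ℂ] ℂ // IsTracialState τ}, Real.sqrt ((τ.1 (star a * a)).re)

/-- The uniform 2-seminorm `‖ξ‖_{2,u} = sup_{τ ∈ T(A)} τ(⟨ξ,ξ⟩)^{1/2}` on `ℓ²(G,A)`. -/
def u2l (ξ : G →₀ A) : ℝ :=
  ⨆ τ : {τ : A →ₗ[ℂ] ℂ // IsTracialState τ}, Real.sqrt ((τ.1 (ip ξ ξ)).re)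

/-- Left multiplication `a·ξ`. -/
def lmul (a : A) (ξ : G →₀ A) : G →₀ A := ξ.mapRange (fun x => a * x) (by simp)

/-- Right multiplication `ξ·a`. -/
def rmul (ξ : G →₀ A) (a : A) : G →₀ A := ξ.mapRange (fun x => x * a) (by simp)

/-- The diagonal action `α̃_g(ξ)(h) = α_g(ξ(g⁻¹h))` on `C_c(G,A)`. -/
def diagAct (α : G →* (A ≃ₐ[ℂ] A)) (g : G) (ξ : G →₀ A) : G →₀ A :=
  (ξ.mapDomain fun h => g * h).mapRange (α g) (map_zero _)

/-- Tracial amenability of an action `α : G → Aut(A)` (Definition 2.2): approximately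
central, approximately invariant, approximately unital vectors in the uniform
2-seminorm, contractive in the Hilbert module norm. -/
def IsTraciallyAmenable (α : G →* (A ≃ₐ[ℂ] A)) : Prop :=
  ∀ (F : Finset A) (K : Finset G) (ε : ℝ), 0 < ε →
    ∃ ξ : G →₀ A, Real.sqrt ‖ip ξ ξ‖ ≤ 1 ∧
      (∀ a ∈ F, u2l (rmul ξ a - lmul a ξ) < ε) ∧
      u2 (ip ξ ξ - 1) < ε ∧
      ∀ g ∈ K, u2l (diagAct α g ξ - ξ) < ε

/-- Amenability of a discrete group: a finitely additive, left-invariant probability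
measure on all subsets. -/
def AmenableGroup (G : Type*) [Group G] : Prop :=
  ∃ μ : Set G → ℝ, (∀ s, 0 ≤ μ s) ∧ μ Set.univ = 1 ∧
    (∀ s t : Set G, Disjoint s t → μ (s ∪ t) = μ s + μ t) ∧
    ∀ (g : G) (s : Set G), μ ((fun k => g * k) '' s) = μ s

namespace TrAux

variable {τ : A →ₗ[ℂ] ℂ}

lemma quad {a b c : ℝ} (ha : 0 ≤ a) (hc : 0 ≤ c) (hb : 0 ≤ b)
    (h : ∀ t : ℝ, 0 ≤ t → 0 ≤ a - 2 * t * b + t ^ 2 * c) : b ^ 2 ≤ a * c := by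
  rcases eq_or_lt_of_le hc with hc0 | hcpos
  · have hb0 : b = 0 := by
      by_contra hb0
      have hbpos : 0 < b := lt_of_le_of_ne hb (Ne.symm hb0)
      have := h ((a + 1) / (2 * b)) (by positivity)
      rw [← hc0] at this
      have h2 : 2 * ((a + 1) / (2 * b)) * b = a + 1 := by
        field_simp
      nlinarith
    subst hb0; nlinarith
  · have := h (b / c) (by positivity)
    have h2 : 2 * (b / c) * b = 2 * (b ^ 2) / c := by ring
    have h3 : (b / c) ^ 2 * c = b ^ 2 / c := by
      field_simp
    rw [h2, h3] at this
    have h4 : b ^ 2 / c ≤ a := by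
      have : 2 * (b ^ 2) / c = 2 * (b ^ 2 / c) := by ring
      linarith [this ▸ ‹0 ≤ a - 2 * (b ^ 2) / c + b ^ 2 / c›]
    calc b ^ 2 = b ^ 2 / c * c := by field_simp
    _ ≤ a * c := by gcongr
lemma expand (hτ : IsTracialState τ) (x y : A) (c : ℂ) :
    τ (star (x + c • y) * (x + c • y)) =
      τ (star x * x) + c * τ (star x * y) + (starRingEnd ℂ) c * τ (star y * x)
        + (c * (starRingEnd ℂ) c) * τ (star y * y) := by
  have : star (x + c • y) * (x + c • y)
      = star x * x + c • (star x * y) + (starRingEnd ℂ) c • (star y * x)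
        + (c * (starRingEnd ℂ) c) • (star y * y) := by
    rw [star_add, star_smul]
    simp only [add_mul, mul_add, smul_mul_assoc, mul_smul_comm, starRingEnd_apply, smul_smul, smul_add]
    abel
  rw [this]
  simp only [map_add, map_smul, smul_eq_mul]

lemma herm (hτ : IsTracialState τ) (x y : A) :
    τ (star y * x) = starRingEnd ℂ (τ (star x * y)) := by
  have h2 := hτ.2.1
  have e1 := expand hτ x y 1
  have e2 := expand hτ x y Complex.I
  have i1 := (h2 (x + (1:ℂ) • y)).2
  have i2 := (h2 (x + Complex.I • y)).2
  rw [e1] at i1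
  rw [e2] at i2
  have ixx := (h2 x).2
  have iyy := (h2 y).2
  set p := τ (star x * y)
  set q := τ (star y * x)
  simp only [map_one, one_mul, mul_one, Complex.add_im, Complex.mul_im, Complex.conj_I,
    Complex.I_re, Complex.I_im, Complex.conj_re, Complex.conj_im, Complex.neg_re,
    Complex.neg_im, Complex.mul_re] at i1 i2
  apply Complex.ext
  · simp only [Complex.conj_re]; nlinarith
  · simp only [Complex.conj_im]; nlinarith

lemma cauchy_schwarz (hτ : IsTracialState τ) (x y : A) :
    ‖τ (star x * y)‖ ^ 2 ≤ (τ (star x * x)).re * (τ (star y * y)).re := by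
  have h2 := hτ.2.1
  set p := τ (star x * y) with hp
  rcases eq_or_ne p 0 with h0 | h0
  · rw [h0]
    simp only [map_zero, norm_zero, ne_eq, OfNat.ofNat_ne_zero, not_false_eq_true, zero_pow]
    exact mul_nonneg (h2 x).1 (h2 y).1
  · apply quad (h2 x).1 (h2 y).1 (norm_nonneg p)
    intro t ht
    have habsne : (‖p‖ : ℝ) ≠ 0 := norm_ne_zero_iff.mpr h0
    set u : ℂ := (starRingEnd ℂ) p / (‖p‖ : ℂ) with hu
    have hup : u * p = ((‖p‖ : ℝ) : ℂ) := by
      have hne : (‖p‖ : ℂ) ≠ 0 := by exact_mod_cast habsne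
      rw [hu, div_mul_eq_mul_div, mul_comm, Complex.mul_conj, Complex.normSq_eq_norm_sq]
      push_cast
      rw [pow_two, mul_div_assoc, div_self hne, mul_one]
    have habs : ‖u‖ = 1 := by
      rw [hu, norm_div, Complex.norm_conj, Complex.norm_real, norm_norm]
      field_simp
    have huu : u * (starRingEnd ℂ) u = 1 := by
      rw [Complex.mul_conj, Complex.normSq_eq_norm_sq, habs]
      norm_num
    set c : ℂ := (-t : ℂ) * u with hc
    have key := (h2 (x + c • y)).1
    rw [expand hτ x y c] at key
    have hq : τ (star y * x) = starRingEnd ℂ p := herm hτ x y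
    rw [hq] at key
    have hc1 : c * p = ((-t * ‖p‖ : ℝ) : ℂ) := by
      rw [hc, mul_assoc, hup]; push_cast; ring
    have hc2 : (starRingEnd ℂ) c * (starRingEnd ℂ) p = ((-t * ‖p‖ : ℝ) : ℂ) := by
      rw [← map_mul, hc1]
      simp [Complex.conj_ofReal]
    have hc3 : c * (starRingEnd ℂ) c = ((t ^ 2 : ℝ) : ℂ) := by
      rw [hc, map_mul]
      push_cast
      have : (-t : ℂ) * u * ((starRingEnd ℂ) (-t : ℂ) * (starRingEnd ℂ) u)
          = ((-t : ℂ) * (starRingEnd ℂ) (-t : ℂ)) * (u * (starRingEnd ℂ) u) := by ring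
      rw [this, huu]
      simp [← Complex.ofReal_neg, Complex.conj_ofReal]
      push_cast
      ring
    rw [hc1, hc2, hc3] at key
    simp only [Complex.add_re, Complex.mul_re, Complex.ofReal_re, Complex.ofReal_im,
      zero_mul, sub_zero] at key
    linarith [key]

variable {τ : A →ₗ[ℂ] ℂ}

lemma tr_nonneg' (hτ : IsTracialState τ) {x : A}
    (hx : x ∈ AddSubmonoid.closure (Set.range fun s : A => star s * s)) :
    0 ≤ (τ x).re ∧ (τ x).im = 0 := by
  induction hx using AddSubmonoid.closure_induction with
  | mem z hz => obtain ⟨s, rfl⟩ := hz; exact hτ.2.1 s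
  | zero => simp
  | add a b _ _ ha hb =>
      constructor
      · simp only [map_add, Complex.add_re]; linarith [ha.1, hb.1]
      · simp only [map_add, Complex.add_im, ha.2, hb.2]; ring

lemma tr_norm_bound (hτ : IsTracialState τ) (x : A) : (τ (star x * x)).re ≤ ‖x‖ ^ 2 := by
  letI := CStarAlgebra.spectralOrder A
  haveI := CStarAlgebra.spectralOrderedRing A
  have h := CStarAlgebra.star_mul_le_algebraMap_norm_sq (A := A) (a := x)
  have hy : (0 : A) ≤ algebraMap ℝ A (‖x‖ ^ 2) - star x * x := sub_nonneg.mpr h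
  rw [StarOrderedRing.nonneg_iff] at hy
  have := (tr_nonneg' hτ hy).1
  have halg : τ (algebraMap ℝ A (‖x‖ ^ 2)) = ((‖x‖ ^ 2 : ℝ) : ℂ) := by
    rw [IsScalarTower.algebraMap_apply ℝ ℂ A, Algebra.algebraMap_eq_smul_one, map_smul, hτ.1]
    simp
  rw [map_sub, halg] at this
  simp only [Complex.sub_re, Complex.ofReal_re] at this
  linarith

lemma tr_abs_le (hτ : IsTracialState τ) (x : A) :
    ‖τ x‖ ≤ Real.sqrt ((τ (star x * x)).re) := by
  have cs := cauchy_schwarz hτ 1 x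
  simp only [star_one, one_mul, hτ.1, Complex.one_re] at cs
  have h0 : (0:ℝ) ≤ ‖τ x‖ := norm_nonneg _
  rw [Real.le_sqrt h0]
  · linarith [cs]
  · exact (hτ.2.1 x).1

lemma tr_abs_le_norm (hτ : IsTracialState τ) (x : A) : ‖τ x‖ ≤ ‖x‖ := by
  refine (tr_abs_le hτ x).trans ?_
  have := tr_norm_bound hτ x
  calc Real.sqrt ((τ (star x * x)).re) ≤ Real.sqrt (‖x‖ ^ 2) := Real.sqrt_le_sqrt this
  _ = ‖x‖ := by rw [Real.sqrt_sq (norm_nonneg x)]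
end TrAux

namespace MeanAux
variable {G : Type*} [Group G]

variable (μ : Set G → ℝ)

open Classical in
/-- `J μ f = ∑_{v ∈ range f} v * μ (f ⁻¹' {v})` for finite-range `f`. -/
def J (f : G → ℝ) : ℝ :=
  if h : (Set.range f).Finite then ∑ v ∈ h.toFinset, v * μ (f ⁻¹' {v}) else 0

variable {μ}
variable (hpos : ∀ s, 0 ≤ μ s) (huniv : μ Set.univ = 1)
  (hadd : ∀ s t : Set G, Disjoint s t → μ (s ∪ t) = μ s + μ t)

section basic
include hadd

lemma mu_empty : μ ∅ = 0 := by
  have := hadd ∅ ∅ (disjoint_bot_left)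
  simp at this
  linarith

/-- finite additivity over pairwise disjoint finite families -/
lemma mu_sum {ι : Type*} (s : Finset ι) (B : ι → Set G)
    (hdisj : ∀ i ∈ s, ∀ j ∈ s, i ≠ j → Disjoint (B i) (B j)) :
    μ (⋃ i ∈ s, B i) = ∑ i ∈ s, μ (B i) := by
  classical
  induction s using Finset.induction_on with
  | empty => simpa using mu_empty hadd
  | insert a t hnotmem ih =>
      rw [Finset.set_biUnion_insert, Finset.sum_insert hnotmem]
      rw [hadd _ _ ?_, ih ?_]
      · intro i hi j hj hij
        exact hdisj i (Finset.mem_insert_of_mem hi) j (Finset.mem_insert_of_mem hj) hij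
      · rw [Set.disjoint_iUnion₂_right]
        intro i hi
        exact hdisj a (Finset.mem_insert_self a t) i (Finset.mem_insert_of_mem hi)
          (fun h => hnotmem (h ▸ hi))

end basic

/-- J over any finite superset of the range -/
lemma J_eq (f : G → ℝ) (S : Finset ℝ) (hS : Set.range f ⊆ S)
    (hadd : ∀ s t : Set G, Disjoint s t → μ (s ∪ t) = μ s + μ t) :
    J μ f = ∑ v ∈ S, v * μ (f ⁻¹' {v}) := by
  classical
  have hfin : (Set.range f).Finite := Set.Finite.subset S.finite_toSet hS
  unfold J
  rw [dif_pos hfin]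
  apply Finset.sum_subset
  · intro v hv
    rw [Set.Finite.mem_toFinset] at hv
    exact hS hv
  · intro v hv hv'
    rw [Set.Finite.mem_toFinset] at hv'
    have : f ⁻¹' {v} = ∅ := by
      ext g
      simp only [Set.mem_preimage, Set.mem_singleton_iff, Set.mem_empty_iff_false, iff_false]
      intro hg
      exact hv' ⟨g, hg⟩
    rw [this, mu_empty hadd, mul_zero]

end MeanAux

namespace MeanAux2
open MeanAux
variable {G : Type*} [Group G]
variable {μ : Set G → ℝ}
variable (hpos : ∀ s, 0 ≤ μ s) (huniv : μ Set.univ = 1)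
  (hadd : ∀ s t : Set G, Disjoint s t → μ (s ∪ t) = μ s + μ t)

section Jlem
include hadd

lemma refine (f h : G → ℝ) (hh : (Set.range h).Finite) (v : ℝ) :
    μ (f ⁻¹' {v}) = ∑ w ∈ hh.toFinset, μ (f ⁻¹' {v} ∩ h ⁻¹' {w}) := by
  classical
  rw [← mu_sum hadd _ _ ?_]
  · congr 1
    ext g
    simp only [Set.mem_iUnion, Set.mem_inter_iff, Set.mem_preimage, Set.mem_singleton_iff,
      Set.Finite.mem_toFinset, Set.mem_range, exists_prop]
    constructor
    · intro hg; exact ⟨h g, ⟨g, rfl⟩, hg, rfl⟩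
    · rintro ⟨w, _, hg, _⟩; exact hg
  · intro i _ j _ hij
    apply Set.disjoint_left.mpr
    rintro g ⟨-, hgi⟩ ⟨-, hgj⟩
    simp only [Set.mem_preimage, Set.mem_singleton_iff] at hgi hgj
    exact hij (by rw [← hgi, ← hgj])

lemma J_add (f h : G → ℝ) (hf : (Set.range f).Finite) (hh : (Set.range h).Finite) :
    J μ (f + h) = J μ f + J μ h := by
  classical
  set Rf := hf.toFinset
  set Rh := hh.toFinset
  set C : ℝ × ℝ → Set G := fun p => f ⁻¹' {p.1} ∩ h ⁻¹' {p.2} with hC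
  have hJf : J μ f = ∑ p ∈ Rf ×ˢ Rh, p.1 * μ (C p) := by
    rw [J_eq f Rf (by simp [Rf]) hadd, Finset.sum_product]
    refine Finset.sum_congr rfl fun v _ => ?_
    rw [refine hadd f h hh v, Finset.mul_sum]
  have hJh : J μ h = ∑ p ∈ Rf ×ˢ Rh, p.2 * μ (C p) := by
    rw [J_eq h Rh (by simp [Rh]) hadd, Finset.sum_product_right]
    refine Finset.sum_congr rfl fun w _ => ?_
    have : ∀ v, h ⁻¹' {w} ∩ f ⁻¹' {v} = C (v, w) := by
      intro v; ext g; simp [hC, and_comm]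
    rw [refine hadd h f hf w, Finset.mul_sum]
    refine Finset.sum_congr rfl fun v _ => ?_
    rw [this v]
  set S : Finset ℝ := (Rf ×ˢ Rh).image (fun p => p.1 + p.2) with hS
  have hsub : Set.range (f + h) ⊆ S := by
    rintro v ⟨g, rfl⟩
    simp only [hS, Finset.coe_image, Set.mem_image, Finset.mem_coe, Finset.mem_product]
    exact ⟨(f g, h g), ⟨by simp [Rf], by simp [Rh]⟩, rfl⟩
  rw [J_eq (f + h) S hsub hadd, hJf, hJh, ← Finset.sum_add_distrib]
  have key : ∀ u ∈ S, u * μ ((f + h) ⁻¹' {u})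
      = ∑ p ∈ (Rf ×ˢ Rh).filter (fun p => p.1 + p.2 = u), (p.1 * μ (C p) + p.2 * μ (C p)) := by
    intro u _
    have hdec : (f + h) ⁻¹' {u} = ⋃ p ∈ (Rf ×ˢ Rh).filter (fun p => p.1 + p.2 = u), C p := by
      ext g
      simp only [Set.mem_preimage, Pi.add_apply, Set.mem_singleton_iff, Set.mem_iUnion,
        Finset.mem_filter, Finset.mem_product, exists_prop]
      constructor
      · intro hg
        exact ⟨(f g, h g), ⟨⟨by simp [Rf], by simp [Rh]⟩, hg⟩, by simp [hC]⟩
      · rintro ⟨⟨v, w⟩, ⟨-, hvw⟩, hg⟩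
        simp only [hC, Set.mem_inter_iff, Set.mem_preimage, Set.mem_singleton_iff] at hg
        rw [← hvw, ← hg.1, ← hg.2]
    rw [hdec, mu_sum hadd _ _ ?_]
    · rw [Finset.mul_sum]
      refine Finset.sum_congr rfl fun p hp => ?_
      rw [Finset.mem_filter] at hp
      rw [← hp.2]; ring
    · rintro ⟨v₁, w₁⟩ h₁ ⟨v₂, w₂⟩ h₂ hne
      apply Set.disjoint_left.mpr
      rintro g ⟨hg1, hg2⟩ ⟨hg3, hg4⟩
      simp only [Set.mem_preimage, Set.mem_singleton_iff] at hg1 hg2 hg3 hg4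
      exact hne (by rw [Prod.mk.injEq]; exact ⟨hg1 ▸ hg3 ▸ rfl, hg2 ▸ hg4 ▸ rfl⟩)
  rw [Finset.sum_congr rfl key]
  exact Finset.sum_fiberwise_of_maps_to (fun p hp => Finset.mem_image.mpr ⟨p, hp, rfl⟩) _

end Jlem
end MeanAux2

namespace MeanAux3
open MeanAux MeanAux2
variable {G : Type*} [Group G]
variable {μ : Set G → ℝ}

lemma fin_comp {f : G → ℝ} (hf : (Set.range f).Finite) (φ : ℝ → ℝ) :
    (Set.range (fun g => φ (f g))).Finite := by
  have : Set.range (fun g => φ (f g)) ⊆ φ '' Set.range f := by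
    rintro v ⟨g, rfl⟩; exact ⟨f g, ⟨g, rfl⟩, rfl⟩
  exact (hf.image φ).subset this

lemma fin_add {f h : G → ℝ} (hf : (Set.range f).Finite) (hh : (Set.range h).Finite) :
    (Set.range (f + h)).Finite := by
  have : Set.range (f + h) ⊆ Set.image2 (· + ·) (Set.range f) (Set.range h) := by
    rintro v ⟨g, rfl⟩; exact ⟨f g, ⟨g, rfl⟩, h g, ⟨g, rfl⟩, rfl⟩
  exact (hf.image2 _ hh).subset this

section Jlem2
variable (hpos : ∀ s, 0 ≤ μ s) (huniv : μ Set.univ = 1)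
  (hadd : ∀ s t : Set G, Disjoint s t → μ (s ∪ t) = μ s + μ t)

include hadd

lemma J_const (r : ℝ) : J μ (fun _ : G => r) = r * μ Set.univ := by
  have h1 : Set.range (fun _ : G => r) ⊆ ({r} : Finset ℝ) := by
    rintro v ⟨g, rfl⟩; simp
  rw [J_eq _ _ h1 hadd, Finset.sum_singleton]
  have : (fun _ : G => r) ⁻¹' {r} = Set.univ := by ext g; simp
  rw [this]

omit huniv in
lemma J_smul (c : ℝ) (f : G → ℝ) (hf : (Set.range f).Finite) :
    J μ (fun g => c * f g) = c * J μ f := by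
  classical
  rcases eq_or_ne c 0 with rfl | hc
  · simp only [zero_mul]
    rw [J_const hadd 0, zero_mul]
  · have hinj : Function.Injective (fun v : ℝ => c * v) :=
      fun a b hab => mul_left_cancel₀ hc hab
    have hsub : Set.range (fun g => c * f g) ⊆ (hf.toFinset.image (fun v => c * v) : Finset ℝ) := by
      rintro v ⟨g, rfl⟩
      exact Finset.mem_coe.mpr (Finset.mem_image.mpr ⟨f g, by simp, rfl⟩)
    rw [J_eq _ _ hsub hadd, Finset.sum_image (fun a _ b _ h => hinj h),
      J_eq f hf.toFinset (by simp) hadd, Finset.mul_sum]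
    refine Finset.sum_congr rfl fun v _ => ?_
    have : (fun g => c * f g) ⁻¹' {c * v} = f ⁻¹' {v} := by
      ext g
      simp only [Set.mem_preimage, Set.mem_singleton_iff]
      exact ⟨fun h => hinj h, fun h => by rw [h]⟩
    rw [this]; ring

include hpos in
lemma J_nonneg (f : G → ℝ) (hf : ∀ g, 0 ≤ f g) : 0 ≤ J μ f := by
  classical
  unfold J
  split
  · next h =>
      apply Finset.sum_nonneg
      intro v hv
      rw [Set.Finite.mem_toFinset] at hv
      obtain ⟨g, rfl⟩ := hv
      exact mul_nonneg (hf g) (hpos _)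
  · exact le_refl 0

include hpos huniv in
lemma J_bound (f : G → ℝ) (hf : (Set.range f).Finite) (M : ℝ) (hM : ∀ g, |f g| ≤ M) :
    |J μ f| ≤ M := by
  classical
  have hpart : ∑ v ∈ hf.toFinset, μ (f ⁻¹' {v}) = 1 := by
    rw [← mu_sum hadd _ _ ?_]
    · rw [show (⋃ v ∈ hf.toFinset, f ⁻¹' {v}) = Set.univ from ?_, huniv]
      ext g
      simp only [Set.mem_iUnion, Set.mem_preimage, Set.mem_singleton_iff,
        Set.Finite.mem_toFinset, Set.mem_univ, iff_true, exists_prop]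
      exact ⟨f g, ⟨g, rfl⟩, rfl⟩
    · intro i _ j _ hij
      apply Set.disjoint_left.mpr
      rintro g hgi hgj
      simp only [Set.mem_preimage, Set.mem_singleton_iff] at hgi hgj
      exact hij (by rw [← hgi, ← hgj])
  unfold J
  rw [dif_pos hf]
  calc |∑ v ∈ hf.toFinset, v * μ (f ⁻¹' {v})| ≤ ∑ v ∈ hf.toFinset, |v * μ (f ⁻¹' {v})| :=
        Finset.abs_sum_le_sum_abs _ _
  _ ≤ ∑ v ∈ hf.toFinset, M * μ (f ⁻¹' {v}) := by
      apply Finset.sum_le_sum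
      intro v hv
      rw [Set.Finite.mem_toFinset] at hv
      obtain ⟨g, rfl⟩ := hv
      rw [abs_mul, abs_of_nonneg (hpos _)]
      exact mul_le_mul_of_nonneg_right (hM g) (hpos _)
  _ = M := by rw [← Finset.mul_sum, hpart, mul_one]

lemma J_invariant (hinv : ∀ (g : G) (s : Set G), μ ((fun k => g * k) '' s) = μ s)
    (f : G → ℝ) (hf : (Set.range f).Finite) (g : G) :
    J μ (fun k => f (g * k)) = J μ f := by
  classical
  have hsub : Set.range (fun k => f (g * k)) ⊆ hf.toFinset := by
    rintro v ⟨k, rfl⟩; simp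
  rw [J_eq _ _ hsub hadd, J_eq f hf.toFinset (by simp) hadd]
  refine Finset.sum_congr rfl fun v _ => ?_
  have hpre : (fun k => f (g * k)) ⁻¹' {v} = (fun k => g⁻¹ * k) '' (f ⁻¹' {v}) := by
    ext k
    simp only [Set.mem_preimage, Set.mem_singleton_iff, Set.mem_image]
    constructor
    · intro hk; exact ⟨g * k, hk, by group⟩
    · rintro ⟨m, hm, rfl⟩; simpa [mul_assoc] using hm
  rw [hpre, hinv g⁻¹]

end Jlem2
end MeanAux3

namespace MeanAux4
open MeanAux MeanAux2 MeanAux3 Filter Topology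
variable {G : Type*} [Group G]

/-- dyadic discretization -/
def approx (n : ℕ) (f : G → ℝ) : G → ℝ := fun g => (⌊f g * 2 ^ n⌋ : ℝ) / 2 ^ n

lemma approx_dist (n : ℕ) (f : G → ℝ) (g : G) : |approx n f g - f g| ≤ (2 ^ n)⁻¹ := by
  have h2 : (0:ℝ) < 2 ^ n := by positivity
  have hdiff : approx n f g - f g = ((⌊f g * 2 ^ n⌋ : ℝ) - f g * 2 ^ n) / 2 ^ n := by
    unfold approx
    field_simp
  rw [hdiff, abs_div, abs_of_pos h2]
  rw [div_le_iff₀ h2, inv_mul_cancel₀ (ne_of_gt h2)]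
  rw [abs_le]
  have l1 := Int.floor_le (f g * 2 ^ n)
  have l2 := Int.lt_floor_add_one (f g * 2 ^ n)
  constructor <;> linarith

lemma approx_finite (n : ℕ) (f : G → ℝ) (M : ℝ) (hM : ∀ g, |f g| ≤ M) :
    (Set.range (approx n f)).Finite := by
  have hsub : Set.range (approx n f) ⊆
      (fun k : ℤ => (k : ℝ) / 2 ^ n) '' (Set.Icc ⌊(-M) * 2 ^ n⌋ ⌊M * 2 ^ n⌋ : Set ℤ) := by
    rintro v ⟨g, rfl⟩
    refine ⟨⌊f g * 2 ^ n⌋, ?_, rfl⟩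
    have h2 : (0:ℝ) < 2 ^ n := by positivity
    have h1 := (abs_le.mp (hM g)).1
    have h3 := (abs_le.mp (hM g)).2
    constructor
    · exact Int.floor_le_floor (by nlinarith)
    · exact Int.floor_le_floor (by nlinarith)
  exact ((Set.finite_Icc _ _).image _).subset hsub

lemma approx_nonneg (n : ℕ) (f : G → ℝ) (hf : ∀ g, 0 ≤ f g) (g : G) : 0 ≤ approx n f g := by
  unfold approx
  have h2 : (0:ℝ) < 2 ^ n := by positivity
  apply div_nonneg _ (le_of_lt h2)
  exact_mod_cast Int.floor_nonneg.mpr (mul_nonneg (hf g) (le_of_lt h2))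

lemma approx_bound (n : ℕ) (f : G → ℝ) (M : ℝ) (hM : ∀ g, |f g| ≤ M) (g : G) :
    |approx n f g| ≤ M + 1 := by
  have h1 := approx_dist n f g
  have h2 := hM g
  have h3 : (2:ℝ) ^ n ≥ 1 := one_le_pow₀ (by norm_num)
  have : ((2:ℝ) ^ n)⁻¹ ≤ 1 := by
    rw [inv_le_one_iff₀]; right; exact h3
  calc |approx n f g| = |(approx n f g - f g) + f g| := by ring_nf
  _ ≤ |approx n f g - f g| + |f g| := abs_add_le _ _
  _ ≤ (2 ^ n)⁻¹ + M := add_le_add h1 h2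
  _ ≤ M + 1 := by linarith

variable {μ : Set G → ℝ}

/-- The mean of a bounded function. -/
def mean (μ : Set G → ℝ) (f : G → ℝ) : ℝ := limUnder atTop (fun n : ℕ => J μ (approx n f))

section meanlem
variable (hpos : ∀ s, 0 ≤ μ s) (huniv : μ Set.univ = 1)
  (hadd : ∀ s t : Set G, Disjoint s t → μ (s ∪ t) = μ s + μ t)

include hpos huniv hadd

/-- key: difference bound for J at finite-range functions -/
lemma J_close (f h : G → ℝ) (hf : (Set.range f).Finite) (hh : (Set.range h).Finite)
    (δ : ℝ) (hδ : ∀ g, |f g - h g| ≤ δ) : |J μ f - J μ h| ≤ δ := by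
  have hneg : (Set.range (fun g => (-1 : ℝ) * h g)).Finite := fin_comp hh (fun v => -1 * v)
  have hdiff : (Set.range (f + fun g => (-1:ℝ) * h g)).Finite := fin_add hf hneg
  have e1 : J μ (f + fun g => (-1:ℝ) * h g) = J μ f - J μ h := by
    rw [J_add hadd _ _ hf hneg, J_smul hadd (-1) h hh]
    ring
  rw [← e1]
  apply J_bound hpos huniv hadd _ hdiff
  intro g
  simpa [neg_mul, sub_eq_add_neg] using hδ g

lemma mean_exists (f : G → ℝ) (M : ℝ) (hM : ∀ g, |f g| ≤ M) :
    Tendsto (fun n : ℕ => J μ (approx n f)) atTop (𝓝 (mean μ f)) := by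
  have hcau : CauchySeq (fun n : ℕ => J μ (approx n f)) := by
    apply cauchySeq_of_le_tendsto_0 (fun N => 2 * (2 ^ N)⁻¹)
    · intro n m N hn hm
      rw [Real.dist_eq]
      have h1 : |J μ (approx n f) - J μ (approx m f)| ≤ (2 ^ n)⁻¹ + (2 ^ m)⁻¹ := by
        apply J_close hpos huniv hadd _ _ (approx_finite n f M hM) (approx_finite m f M hM)
        intro g
        calc |approx n f g - approx m f g|
            = |(approx n f g - f g) - (approx m f g - f g)| := by ring_nf
        _ ≤ |approx n f g - f g| + |approx m f g - f g| := abs_sub _ _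
        _ ≤ (2 ^ n)⁻¹ + (2 ^ m)⁻¹ := add_le_add (approx_dist n f g) (approx_dist m f g)
      refine h1.trans ?_
      have e1 : ((2:ℝ) ^ n)⁻¹ ≤ (2 ^ N)⁻¹ := by
        apply inv_anti₀ (by positivity)
        exact pow_le_pow_right₀ (by norm_num) hn
      have e2 : ((2:ℝ) ^ m)⁻¹ ≤ (2 ^ N)⁻¹ := by
        apply inv_anti₀ (by positivity)
        exact pow_le_pow_right₀ (by norm_num) hm
      linarith
    · rw [show (fun N : ℕ => 2 * ((2:ℝ) ^ N)⁻¹) = fun N => 2 * (2⁻¹) ^ N by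
        funext N; rw [inv_pow]]
      have := (tendsto_pow_atTop_nhds_zero_of_lt_one (r := (2:ℝ)⁻¹) (by norm_num)
        (by norm_num)).const_mul (2:ℝ)
      simpa using this
  obtain ⟨x, hx⟩ := cauchySeq_tendsto_of_complete hcau
  rwa [mean, hx.limUnder_eq]

end meanlem
end MeanAux4

namespace MeanAux5
open MeanAux MeanAux2 MeanAux3 MeanAux4 Filter Topology
variable {G : Type*} [Group G]
variable {μ : Set G → ℝ}
variable (hpos : ∀ s, 0 ≤ μ s) (huniv : μ Set.univ = 1)
  (hadd : ∀ s t : Set G, Disjoint s t → μ (s ∪ t) = μ s + μ t)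

include hpos huniv hadd

lemma mean_add (f h : G → ℝ) (M : ℝ) (hMf : ∀ g, |f g| ≤ M) (hMh : ∀ g, |h g| ≤ M) :
    mean μ (f + h) = mean μ f + mean μ h := by
  have hMfh : ∀ g, |(f + h) g| ≤ M + M := fun g => (abs_add_le _ _).trans (add_le_add (hMf g) (hMh g))
  have t1 := mean_exists hpos huniv hadd f M hMf
  have t2 := mean_exists hpos huniv hadd h M hMh
  have t3 := mean_exists hpos huniv hadd (f + h) (M + M) hMfh
  have tdiff : Tendsto (fun n : ℕ => J μ (approx n (f + h)) -
      (J μ (approx n f) + J μ (approx n h))) atTop (𝓝 0) := by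
    have hb : ∀ n : ℕ, |J μ (approx n (f + h)) - (J μ (approx n f) + J μ (approx n h))|
        ≤ 3 * (2 ^ n)⁻¹ := by
      intro n
      have e1 : J μ (approx n f) + J μ (approx n h) = J μ (approx n f + approx n h) :=
        (J_add hadd _ _ (approx_finite n f M hMf) (approx_finite n h M hMh)).symm
      rw [e1]
      have := J_close hpos huniv hadd (approx n (f + h)) (approx n f + approx n h)
        (approx_finite n (f + h) (M + M) hMfh)
        (fin_add (approx_finite n f M hMf) (approx_finite n h M hMh)) (3 * (2 ^ n)⁻¹) ?_
      · exact this
      · intro g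
        have d1 := approx_dist n (f + h) g
        have d2 := approx_dist n f g
        have d3 := approx_dist n h g
        have : approx n (f + h) g - (approx n f + approx n h) g
            = (approx n (f + h) g - (f + h) g) - (approx n f g - f g) - (approx n h g - h g) := by
          simp only [Pi.add_apply]; ring
        rw [this]
        calc |_ - _ - _| ≤ |approx n (f + h) g - (f + h) g - (approx n f g - f g)|
              + |approx n h g - h g| := abs_sub _ _
        _ ≤ |approx n (f + h) g - (f + h) g| + |approx n f g - f g| + |approx n h g - h g| :=
            add_le_add_left (abs_sub _ _) _
        _ ≤ (2 ^ n)⁻¹ + (2 ^ n)⁻¹ + (2 ^ n)⁻¹ := by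
            exact add_le_add (add_le_add d1 d2) d3
        _ = 3 * (2 ^ n)⁻¹ := by ring
    have hb0 : Tendsto (fun n : ℕ => 3 * ((2:ℝ) ^ n)⁻¹) atTop (𝓝 0) := by
      have := (tendsto_pow_atTop_nhds_zero_of_lt_one (r := (2:ℝ)⁻¹) (by norm_num)
        (by norm_num)).const_mul (3:ℝ)
      simpa [inv_pow] using this
    apply squeeze_zero_norm hb hb0
  have := t3.sub (t1.add t2)
  have h2 := tdiff.sub this
  have : mean μ (f + h) - (mean μ f + mean μ h) = 0 := by
    have := tendsto_nhds_unique this tdiff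
    linarith [this]
  linarith [this]

lemma mean_smul (c : ℝ) (f : G → ℝ) (M : ℝ) (hMf : ∀ g, |f g| ≤ M) :
    mean μ (fun g => c * f g) = c * mean μ f := by
  have hMcf : ∀ g, |c * f g| ≤ |c| * M := by
    intro g; rw [abs_mul]
    exact mul_le_mul_of_nonneg_left (hMf g) (abs_nonneg c)
  have t1 := mean_exists hpos huniv hadd f M hMf
  have t2 := mean_exists hpos huniv hadd (fun g => c * f g) (|c| * M) hMcf
  have tdiff : Tendsto (fun n : ℕ => J μ (approx n (fun g => c * f g)) - c * J μ (approx n f))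
      atTop (𝓝 0) := by
    have hb : ∀ n : ℕ, |J μ (approx n (fun g => c * f g)) - c * J μ (approx n f)|
        ≤ (1 + |c|) * (2 ^ n)⁻¹ := by
      intro n
      have e1 : c * J μ (approx n f) = J μ (fun g => c * approx n f g) :=
        (J_smul hadd c _ (approx_finite n f M hMf)).symm
      rw [e1]
      apply J_close hpos huniv hadd _ _ (approx_finite n _ (|c| * M) hMcf)
        (fin_comp (approx_finite n f M hMf) (fun v => c * v))
      intro g
      have d1 := approx_dist n (fun g => c * f g) g
      have d2 := approx_dist n f g
      have : approx n (fun g => c * f g) g - c * approx n f g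
          = (approx n (fun g => c * f g) g - c * f g) - c * (approx n f g - f g) := by ring
      rw [this]
      calc |_ - _| ≤ |approx n (fun g => c * f g) g - c * f g| + |c * (approx n f g - f g)| :=
          abs_sub _ _
      _ ≤ (2 ^ n)⁻¹ + |c| * (2 ^ n)⁻¹ := by
          refine add_le_add d1 ?_
          rw [abs_mul]
          exact mul_le_mul_of_nonneg_left d2 (abs_nonneg c)
      _ = (1 + |c|) * (2 ^ n)⁻¹ := by ring
    have hb0 : Tendsto (fun n : ℕ => (1 + |c|) * ((2:ℝ) ^ n)⁻¹) atTop (𝓝 0) := by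
      have := (tendsto_pow_atTop_nhds_zero_of_lt_one (r := (2:ℝ)⁻¹) (by norm_num)
        (by norm_num)).const_mul (1 + |c|)
      simpa [inv_pow] using this
    apply squeeze_zero_norm hb hb0
  have := t2.sub (t1.const_mul c)
  have h2 := tdiff.sub this
  have hu := tendsto_nhds_unique this tdiff
  linarith [hu]

lemma mean_const (r : ℝ) : mean μ (fun _ : G => r) = r := by
  have : ∀ n : ℕ, |J μ (approx n (fun _ : G => r)) - r| ≤ (2 ^ n)⁻¹ := by
    intro n
    have e1 : J μ (approx n (fun _ : G => r)) = (⌊r * 2 ^ n⌋ : ℝ) / 2 ^ n * μ Set.univ := by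
      exact J_const hadd _
    rw [e1, huniv, mul_one]
    exact approx_dist n (fun _ : G => r) (1 : G)
  have ht : Tendsto (fun n : ℕ => J μ (approx n (fun _ : G => r))) atTop (𝓝 r) := by
    rw [show (fun n : ℕ => J μ (approx n (fun _ : G => r)))
        = fun n => (J μ (approx n (fun _ : G => r)) - r) + r from by funext n; ring]
    rw [show (𝓝 r) = 𝓝 (0 + r) by rw [zero_add]]
    apply Tendsto.add_const
    apply squeeze_zero_norm (fun n => by simpa using this n)
    have := tendsto_pow_atTop_nhds_zero_of_lt_one (r := (2:ℝ)⁻¹) (by norm_num) (by norm_num)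
    simpa [inv_pow] using this
  rw [mean, ht.limUnder_eq]

lemma mean_nonneg (f : G → ℝ) (M : ℝ) (hMf : ∀ g, |f g| ≤ M) (hf : ∀ g, 0 ≤ f g) :
    0 ≤ mean μ f := by
  have t1 := mean_exists hpos huniv hadd f M hMf
  apply le_of_tendsto_of_tendsto' tendsto_const_nhds t1
  intro n
  exact J_nonneg hpos hadd (approx n f) (approx_nonneg n f hf)

lemma mean_bound (f : G → ℝ) (M : ℝ) (hMf : ∀ g, |f g| ≤ M) : |mean μ f| ≤ M + 1 := by
  have t1 := mean_exists hpos huniv hadd f M hMf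
  have : ∀ n : ℕ, |J μ (approx n f)| ≤ M + 1 := fun n =>
    J_bound hpos huniv hadd _ (approx_finite n f M hMf) (M + 1) (approx_bound n f M hMf)
  have habs := t1.abs
  exact le_of_tendsto habs (Eventually.of_forall this)

lemma mean_invariant (hinv : ∀ (g : G) (s : Set G), μ ((fun k => g * k) '' s) = μ s)
    (f : G → ℝ) (M : ℝ) (hMf : ∀ g, |f g| ≤ M) (g : G) :
    mean μ (fun k => f (g * k)) = mean μ f := by
  have : (fun n : ℕ => J μ (approx n (fun k => f (g * k)))) = fun n => J μ (approx n f) := by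
    funext n
    have e1 : approx n (fun k => f (g * k)) = fun k => approx n f (g * k) := rfl
    rw [e1]
    exact J_invariant hadd hinv (approx n f) (approx_finite n f M hMf) g
  rw [mean, this, mean]

end MeanAux5


namespace Dir1
open TrAux MeanAux MeanAux2 MeanAux3 MeanAux4 MeanAux5

variable {G : Type*} [Group G] {A : Type*} [CStarAlgebra A]

lemma comp_state (α : G →* (A ≃ₐ[ℂ] A))
    (hstar : ∀ (g : G) (a : A), α g (star a) = star (α g a))
    {τ : A →ₗ[ℂ] ℂ} (hτ : IsTracialState τ) (g : G) :
    IsTracialState (τ ∘ₗ (α g).toLinearMap) := by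
  refine ⟨?_, fun a => ?_, fun a b => ?_⟩
  · simp only [LinearMap.comp_apply, AlgEquiv.toLinearMap_apply, map_one]
    exact hτ.1
  · simp only [LinearMap.comp_apply, AlgEquiv.toLinearMap_apply, map_mul, hstar]
    exact hτ.2.1 ((α g) a)
  · simp only [LinearMap.comp_apply, AlgEquiv.toLinearMap_apply, map_mul]
    exact hτ.2.2 _ _

variable {μ : Set G → ℝ}
variable (hpos : ∀ s, 0 ≤ μ s) (huniv : μ Set.univ = 1)
  (hadd : ∀ s t : Set G, Disjoint s t → μ (s ∪ t) = μ s + μ t)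

include hpos huniv hadd in
lemma mean_lin (u v : G → ℝ) (Mu Mv : ℝ) (hu : ∀ g, |u g| ≤ Mu) (hv : ∀ g, |v g| ≤ Mv)
    (x y : ℝ) :
    mean μ (fun g => x * u g + y * v g) = x * mean μ u + y * mean μ v := by
  have hMu : 0 ≤ Mu := le_trans (abs_nonneg _) (hu 1)
  have hMv : 0 ≤ Mv := le_trans (abs_nonneg _) (hv 1)
  set M := |x| * Mu + |y| * Mv with hM
  have h1 : ∀ g, |x * u g| ≤ M := by
    intro g
    rw [abs_mul]
    have := mul_le_mul_of_nonneg_left (hu g) (abs_nonneg x)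
    have h2 : 0 ≤ |y| * Mv := mul_nonneg (abs_nonneg y) hMv
    linarith
  have h2 : ∀ g, |y * v g| ≤ M := by
    intro g
    rw [abs_mul]
    have := mul_le_mul_of_nonneg_left (hv g) (abs_nonneg y)
    have h3 : 0 ≤ |x| * Mu := mul_nonneg (abs_nonneg x) hMu
    linarith
  rw [show (fun g => x * u g + y * v g) = (fun g => x * u g) + (fun g => y * v g) from rfl]
  rw [mean_add hpos huniv hadd _ _ M h1 h2, mean_smul hpos huniv hadd x u Mu hu,
    mean_smul hpos huniv hadd y v Mv hv]

include hpos huniv hadd in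
lemma dir1 (α : G →* (A ≃ₐ[ℂ] A))
    (hstar : ∀ (g : G) (a : A), α g (star a) = star (α g a))
    {τ₀ : A →ₗ[ℂ] ℂ} (hτ₀ : IsTracialState τ₀)
    (hinv : ∀ (g : G) (s : Set G), μ ((fun k => g * k) '' s) = μ s) :
    ∃ τ : A →ₗ[ℂ] ℂ, IsTracialState τ ∧ ∀ (g : G) (a : A), τ (α g a) = τ a := by
  classical
  set fre : A → G → ℝ := fun a g => (τ₀ ((α g⁻¹) a)).re with hfre
  set fim : A → G → ℝ := fun a g => (τ₀ ((α g⁻¹) a)).im with hfim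
  have hb : ∀ (a : A) (g : G), ‖τ₀ ((α g⁻¹) a)‖ ≤ ‖a‖ := by
    intro a g
    have := tr_abs_le_norm (comp_state α hstar hτ₀ g⁻¹) a
    simpa using this
  have hbre : ∀ (a : A) (g : G), |fre a g| ≤ ‖a‖ :=
    fun a g => le_trans (Complex.abs_re_le_norm _) (hb a g)
  have hbim : ∀ (a : A) (g : G), |fim a g| ≤ ‖a‖ :=
    fun a g => le_trans (Complex.abs_im_le_norm _) (hb a g)
  -- additivity of components
  have hfre_add : ∀ a b : A, fre (a + b) = fre a + fre b := by
    intro a b; funext g; simp [hfre, Complex.add_re]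
  have hfim_add : ∀ a b : A, fim (a + b) = fim a + fim b := by
    intro a b; funext g; simp [hfim, Complex.add_im]
  have hmadd : ∀ (φ : A → G → ℝ), (∀ a g, |φ a g| ≤ ‖a‖) →
      (∀ a b : A, φ (a + b) = φ a + φ b) →
      ∀ a b : A, mean μ (φ (a + b)) = mean μ (φ a) + mean μ (φ b) := by
    intro φ hφb hφa a b
    rw [hφa a b]
    exact mean_add hpos huniv hadd _ _ (max ‖a‖ ‖b‖)
      (fun g => le_trans (hφb a g) (le_max_left _ _))
      (fun g => le_trans (hφb b g) (le_max_right _ _))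
  -- the underlying function
  set M : A → ℂ := fun a => (mean μ (fre a) : ℂ) + Complex.I * (mean μ (fim a) : ℂ) with hMdef
  have hMadd : ∀ a b : A, M (a + b) = M a + M b := by
    intro a b
    rw [hMdef]
    simp only
    rw [hmadd fre hbre hfre_add a b, hmadd fim hbim hfim_add a b]
    push_cast
    ring
  have hMsmul : ∀ (c : ℂ) (a : A), M (c • a) = c * M a := by
    intro c a
    have h1 : fre (c • a) = fun g => c.re * fre a g + (-c.im) * fim a g := by
      funext g
      simp only [hfre, hfim, map_smul]
      simp [Complex.mul_re]
      ring
    have h2 : fim (c • a) = fun g => c.im * fre a g + c.re * fim a g := by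
      funext g
      simp only [hfre, hfim, map_smul]
      simp [Complex.mul_im]
      ring
    rw [hMdef]
    simp only
    rw [h1, h2, mean_lin hpos huniv hadd _ _ ‖a‖ ‖a‖ (hbre a) (hbim a),
      mean_lin hpos huniv hadd _ _ ‖a‖ ‖a‖ (hbre a) (hbim a)]
    apply Complex.ext <;> simp <;> ring
  set T : A →ₗ[ℂ] ℂ :=
    { toFun := M
      map_add' := hMadd
      map_smul' := fun c a => by rw [RingHom.id_apply]; exact hMsmul c a } with hTdef
  have hTapp : ∀ a : A, T a = (mean μ (fre a) : ℂ) + Complex.I * (mean μ (fim a) : ℂ) :=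
    fun a => rfl
  refine ⟨T, ⟨?_, fun a => ?_, fun a b => ?_⟩, fun h a => ?_⟩
  · -- T 1 = 1
    rw [hTapp]
    have e1 : fre 1 = fun _ : G => 1 := by
      funext g; simp [hfre, hτ₀.1]
    have e2 : fim 1 = fun _ : G => 0 := by
      funext g; simp [hfim, hτ₀.1]
    rw [e1, e2, mean_const hpos huniv hadd, mean_const hpos huniv hadd]
    simp
  · -- positivity
    have hkey : ∀ g : G, (α g⁻¹) (star a * a) = star ((α g⁻¹) a) * ((α g⁻¹) a) := by
      intro g; rw [map_mul, hstar]
    constructor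
    · rw [hTapp]
      simp only [Complex.add_re, Complex.ofReal_re, Complex.mul_re, Complex.I_re,
        Complex.I_im, Complex.ofReal_im, zero_mul, one_mul, mul_zero]
      have : 0 ≤ mean μ (fre (star a * a)) := by
        apply mean_nonneg hpos huniv hadd _ ‖star a * a‖ (hbre _)
        intro g
        rw [hfre]
        simp only [hkey g]
        exact (hτ₀.2.1 _).1
      simp only [hfre] at this ⊢
      linarith
    · rw [hTapp]
      simp only [Complex.add_im, Complex.ofReal_im, Complex.mul_im, Complex.I_re,
        Complex.I_im, Complex.ofReal_re, zero_mul, one_mul, mul_zero]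
      have e2 : fim (star a * a) = fun _ : G => 0 := by
        funext g
        rw [hfim]
        simp only [hkey g]
        exact (hτ₀.2.1 _).2
      rw [e2, mean_const hpos huniv hadd]
      simp
  · -- trace property
    have e1 : fre (a * b) = fre (b * a) := by
      funext g; rw [hfre]; simp only [map_mul]; rw [hτ₀.2.2]
    have e2 : fim (a * b) = fim (b * a) := by
      funext g; rw [hfim]; simp only [map_mul]; rw [hτ₀.2.2]
    rw [hTapp, hTapp, e1, e2]
  · -- invariance
    have e1 : fre ((α h) a) = fun g => fre a (h⁻¹ * g) := by
      funext g
      rw [hfre]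
      simp only []
      congr 2
      rw [mul_inv_rev, inv_inv, map_mul, AlgEquiv.mul_apply]
    have e2 : fim ((α h) a) = fun g => fim a (h⁻¹ * g) := by
      funext g
      rw [hfim]
      simp only []
      congr 2
      rw [mul_inv_rev, inv_inv, map_mul, AlgEquiv.mul_apply]
    rw [hTapp, hTapp, e1, e2,
      mean_invariant hpos huniv hadd hinv (fre a) ‖a‖ (hbre a) h⁻¹,
      mean_invariant hpos huniv hadd hinv (fim a) ‖a‖ (hbim a) h⁻¹]

end Dir1


namespace Dir2
open TrAux Filter Topology

variable {G : Type*} [Group G] {A : Type*} [CStarAlgebra A]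

open Classical in
/-- partial quadratic form of a finitely supported vector on a subset -/
def q (τ : A →ₗ[ℂ] ℂ) (ζ : G →₀ A) (s : Set G) : ℝ :=
  (τ (∑ h ∈ ζ.support.filter (fun h => h ∈ s), star (ζ h) * ζ h)).re

variable {τ : A →ₗ[ℂ] ℂ}

open Classical in
lemma q_eq_sum (hτ : IsTracialState τ) (ζ : G →₀ A) (s : Set G) (T : Finset G)
    (hT1 : ∀ h ∈ ζ.support, h ∈ s → h ∈ T) (hT2 : ∀ h ∈ T, h ∈ s) :
    q τ ζ s = (τ (∑ h ∈ T, star (ζ h) * ζ h)).re := by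
  unfold q
  congr 2
  apply Finset.sum_subset
  · intro h hh
    rw [Finset.mem_filter] at hh
    exact hT1 h hh.1 hh.2
  · intro h hhT hh
    rw [Finset.mem_filter] at hh
    push_neg at hh
    have : h ∉ ζ.support := by
      intro hsup
      exact (hh hsup) (hT2 h hhT)
    rw [Finsupp.notMem_support_iff] at this
    rw [this, star_zero, zero_mul]

open Classical in
lemma q_nonneg (hτ : IsTracialState τ) (ζ : G →₀ A) (s : Set G) : 0 ≤ q τ ζ s := by
  unfold q
  rw [map_sum, Complex.re_sum]
  apply Finset.sum_nonneg
  intro h _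
  exact (hτ.2.1 (ζ h)).1

open Classical in
lemma q_le_univ (hτ : IsTracialState τ) (ζ : G →₀ A) (s : Set G) :
    q τ ζ s ≤ q τ ζ Set.univ := by
  unfold q
  rw [map_sum, map_sum, Complex.re_sum, Complex.re_sum]
  apply Finset.sum_le_sum_of_subset_of_nonneg
  · intro h hh
    simp only [Finset.mem_filter] at hh ⊢
    exact ⟨hh.1, trivial⟩
  · intro h _ _
    exact (hτ.2.1 (ζ h)).1

open Classical in
lemma q_union (hτ : IsTracialState τ) (ζ : G →₀ A) (s t : Set G) (hst : Disjoint s t) :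
    q τ ζ (s ∪ t) = q τ ζ s + q τ ζ t := by
  unfold q
  have hdis : Disjoint (ζ.support.filter (fun h => h ∈ s)) (ζ.support.filter (fun h => h ∈ t)) := by
    rw [Finset.disjoint_left]
    intro h h1 h2
    rw [Finset.mem_filter] at h1 h2
    exact Set.disjoint_left.mp hst h1.2 h2.2
  rw [map_sum, map_sum, map_sum, Complex.re_sum, Complex.re_sum, Complex.re_sum,
    ← Finset.sum_union hdis]
  apply Finset.sum_congr ?_ (fun _ _ => rfl)
  ext h
  simp only [Finset.mem_filter, Finset.mem_union, Set.mem_union]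
  tauto

open Classical in
lemma q_univ (hτ : IsTracialState τ) (ζ : G →₀ A) :
    q τ ζ Set.univ = (τ (ip ζ ζ)).re := by
  rw [q_eq_sum hτ ζ Set.univ ζ.support (fun h hh _ => hh) (fun _ _ => trivial)]
  rfl

lemma q_neg (ζ : G →₀ A) (s : Set G) : q τ (-ζ) s = q τ ζ s := by
  unfold q
  congr 2
  rw [Finsupp.support_neg]
  apply Finset.sum_congr rfl
  intro h _
  rw [Finsupp.neg_apply, star_neg, neg_mul_neg]

-- diagonal action lemmas
lemma diag_apply (α : G →* (A ≃ₐ[ℂ] A)) (g : G) (ξ : G →₀ A) (h : G) :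
    diagAct α g ξ (g * h) = α g (ξ h) := by
  unfold diagAct
  rw [Finsupp.mapRange_apply, Finsupp.mapDomain_apply (mul_right_injective g)]

lemma diag_apply' (α : G →* (A ≃ₐ[ℂ] A)) (g : G) (ξ : G →₀ A) (k : G) :
    diagAct α g ξ k = α g (ξ (g⁻¹ * k)) := by
  have : k = g * (g⁻¹ * k) := by group
  rw [this, diag_apply]
  congr 1
  group

open Classical in
lemma diag_support (α : G →* (A ≃ₐ[ℂ] A)) (g : G) (ξ : G →₀ A) :
    (diagAct α g ξ).support ⊆ ξ.support.image (fun k => g * k) := by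
  intro h hh
  rw [Finsupp.mem_support_iff] at hh
  rw [diag_apply'] at hh
  have h1 : ξ (g⁻¹ * h) ≠ 0 := by
    intro h0
    rw [h0, map_zero] at hh
    exact hh rfl
  exact Finset.mem_image.mpr ⟨g⁻¹ * h, Finsupp.mem_support_iff.mpr h1, by group⟩

-- sup bounds for the uniform seminorms
lemma le_u2 (hτ : IsTracialState τ) (a : A) :
    Real.sqrt ((τ (star a * a)).re) ≤ u2 a := by
  have hbdd : BddAbove (Set.range fun σ : {σ : A →ₗ[ℂ] ℂ // IsTracialState σ} =>
      Real.sqrt ((σ.1 (star a * a)).re)) := by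
    refine ⟨‖a‖, ?_⟩
    rintro x ⟨σ, rfl⟩
    calc Real.sqrt ((σ.1 (star a * a)).re) ≤ Real.sqrt (‖a‖ ^ 2) :=
        Real.sqrt_le_sqrt (tr_norm_bound σ.2 a)
    _ = ‖a‖ := Real.sqrt_sq (norm_nonneg a)
  exact le_ciSup hbdd ⟨τ, hτ⟩

lemma le_u2l (hτ : IsTracialState τ) (ξ : G →₀ A) :
    Real.sqrt ((τ (ip ξ ξ)).re) ≤ u2l ξ := by
  have hbdd : BddAbove (Set.range fun σ : {σ : A →ₗ[ℂ] ℂ // IsTracialState σ} =>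
      Real.sqrt ((σ.1 (ip ξ ξ)).re)) := by
    refine ⟨Real.sqrt ‖ip ξ ξ‖, ?_⟩
    rintro x ⟨σ, rfl⟩
    apply Real.sqrt_le_sqrt
    exact le_trans (Complex.re_le_norm _) (tr_abs_le_norm σ.2 _)
  exact le_ciSup hbdd ⟨τ, hτ⟩

lemma abs_le_u2 (hτ : IsTracialState τ) (a : A) : ‖τ a‖ ≤ u2 a :=
  le_trans (tr_abs_le hτ a) (le_u2 hτ a)

-- Claim A: equivariance of q
open Classical in
lemma q_diag (hτ : IsTracialState τ) (α : G →* (A ≃ₐ[ℂ] A))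
    (hstar : ∀ (g : G) (a : A), α g (star a) = star (α g a))
    (hGinv : ∀ (g : G) (a : A), τ (α g a) = τ a)
    (g : G) (ξ : G →₀ A) (s : Set G) :
    q τ (diagAct α g ξ) ((fun k => g * k) '' s) = q τ ξ s := by
  classical
  set η := diagAct α g ξ with hη
  set T : Finset G := (ξ.support.filter (fun h => h ∈ s)).image (fun k => g * k) with hTdef
  have h1 : q τ η ((fun k => g * k) '' s) = (τ (∑ h ∈ T, star (η h) * η h)).re := by
    apply q_eq_sum hτ
    · intro h hh hs
      have hsup := diag_support α g ξ hh
      rw [Finset.mem_image] at hsup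
      obtain ⟨k, hk, rfl⟩ := hsup
      rw [hTdef]
      apply Finset.mem_image.mpr
      refine ⟨k, ?_, rfl⟩
      rw [Finset.mem_filter]
      obtain ⟨m, hm, hme⟩ := hs
      have : m = k := mul_left_cancel hme
      exact ⟨hk, this ▸ hm⟩
    · intro h hh
      rw [hTdef, Finset.mem_image] at hh
      obtain ⟨k, hk, rfl⟩ := hh
      exact ⟨k, (Finset.mem_filter.mp hk).2, rfl⟩
  rw [h1, hTdef, Finset.sum_image (fun a _ b _ h => mul_left_cancel h)]
  have h2 : ∀ k, star (η (g * k)) * η (g * k) = α g (star (ξ k) * ξ k) := by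
    intro k
    rw [hη, diag_apply, map_mul, hstar]
  rw [Finset.sum_congr rfl (fun k _ => h2 k), ← map_sum, hGinv]
  rfl

-- helper: Cauchy-Schwarz for finite sums of square roots
lemma sum_sqrt_le {ι : Type*} (s : Finset ι) (a d : ι → ℝ) (ha : ∀ i ∈ s, 0 ≤ a i)
    (hd : ∀ i ∈ s, 0 ≤ d i) :
    ∑ i ∈ s, Real.sqrt (a i) * Real.sqrt (d i)
      ≤ Real.sqrt (∑ i ∈ s, a i) * Real.sqrt (∑ i ∈ s, d i) := by
  have key := Finset.sum_mul_sq_le_sq_mul_sq s (fun i => Real.sqrt (a i))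
    (fun i => Real.sqrt (d i))
  have e1 : ∀ i ∈ s, Real.sqrt (a i) ^ 2 = a i := fun i hi => Real.sq_sqrt (ha i hi)
  have e2 : ∀ i ∈ s, Real.sqrt (d i) ^ 2 = d i := fun i hi => Real.sq_sqrt (hd i hi)
  rw [Finset.sum_congr rfl e1, Finset.sum_congr rfl e2] at key
  have hnn : 0 ≤ ∑ i ∈ s, Real.sqrt (a i) * Real.sqrt (d i) :=
    Finset.sum_nonneg fun i hi => mul_nonneg (Real.sqrt_nonneg _) (Real.sqrt_nonneg _)
  calc ∑ i ∈ s, Real.sqrt (a i) * Real.sqrt (d i)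
      = Real.sqrt ((∑ i ∈ s, Real.sqrt (a i) * Real.sqrt (d i)) ^ 2) :=
        (Real.sqrt_sq hnn).symm
  _ ≤ Real.sqrt ((∑ i ∈ s, a i) * (∑ i ∈ s, d i)) := Real.sqrt_le_sqrt key
  _ = Real.sqrt (∑ i ∈ s, a i) * Real.sqrt (∑ i ∈ s, d i) :=
      Real.sqrt_mul (Finset.sum_nonneg ha) _

-- Claim B: quantitative comparison
open Classical in
lemma q_diff (hτ : IsTracialState τ) (ζ ζ' : G →₀ A) (S : Set G) :
    |q τ ζ' S - q τ ζ S| ≤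
      Real.sqrt (q τ ζ' Set.univ) * Real.sqrt (q τ (ζ' - ζ) Set.univ)
        + Real.sqrt (q τ (ζ' - ζ) Set.univ) * Real.sqrt (q τ ζ Set.univ) := by
  classical
  set δ := ζ' - ζ with hδ
  set T : Finset G := (ζ.support ∪ ζ'.support).filter (fun h => h ∈ S) with hTdef
  have hsubδ : δ.support ⊆ ζ.support ∪ ζ'.support := by
    intro h hh
    rw [Finsupp.mem_support_iff] at hh
    rw [Finset.mem_union, Finsupp.mem_support_iff, Finsupp.mem_support_iff]
    by_contra hc
    push_neg at hc
    apply hh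
    rw [hδ, Finsupp.sub_apply, hc.1, hc.2, sub_zero]
  have hTmem : ∀ h ∈ T, h ∈ S := fun h hh => (Finset.mem_filter.mp hh).2
  have hq : ∀ ρ : G →₀ A, ρ.support ⊆ ζ.support ∪ ζ'.support →
      q τ ρ S = ∑ h ∈ T, (τ (star (ρ h) * ρ h)).re := by
    intro ρ hρ
    rw [q_eq_sum hτ ρ S T (fun h hh hs => Finset.mem_filter.mpr ⟨hρ hh, hs⟩) hTmem,
      map_sum, Complex.re_sum]
  have hqζ : q τ ζ S = ∑ h ∈ T, (τ (star (ζ h) * ζ h)).re :=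
    hq ζ (fun h hh => Finset.mem_union_left _ hh)
  have hqζ' : q τ ζ' S = ∑ h ∈ T, (τ (star (ζ' h) * ζ' h)).re :=
    hq ζ' (fun h hh => Finset.mem_union_right _ hh)
  -- termwise decomposition
  have hterm : ∀ h : G, star (ζ' h) * ζ' h - star (ζ h) * ζ h
      = star (ζ' h) * δ h + star (δ h) * ζ h := by
    intro h
    rw [hδ, Finsupp.sub_apply, star_sub, sub_mul, mul_sub]
    abel
  have hdiff : q τ ζ' S - q τ ζ S
      = ∑ h ∈ T, ((τ (star (ζ' h) * δ h)).re + (τ (star (δ h) * ζ h)).re) := by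
    rw [hqζ, hqζ', ← Finset.sum_sub_distrib]
    apply Finset.sum_congr rfl
    intro h _
    rw [← Complex.sub_re, ← map_sub, hterm h, map_add, Complex.add_re]
  rw [hdiff]
  have habs : |∑ h ∈ T, ((τ (star (ζ' h) * δ h)).re + (τ (star (δ h) * ζ h)).re)|
      ≤ ∑ h ∈ T, Real.sqrt ((τ (star (ζ' h) * ζ' h)).re) * Real.sqrt ((τ (star (δ h) * δ h)).re)
        + ∑ h ∈ T, Real.sqrt ((τ (star (δ h) * δ h)).re) * Real.sqrt ((τ (star (ζ h) * ζ h)).re) := by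
    calc |∑ h ∈ T, ((τ (star (ζ' h) * δ h)).re + (τ (star (δ h) * ζ h)).re)|
        ≤ ∑ h ∈ T, |(τ (star (ζ' h) * δ h)).re + (τ (star (δ h) * ζ h)).re| :=
          Finset.abs_sum_le_sum_abs _ _
    _ ≤ ∑ h ∈ T, (|(τ (star (ζ' h) * δ h)).re| + |(τ (star (δ h) * ζ h)).re|) :=
          Finset.sum_le_sum fun h _ => abs_add_le _ _
    _ = ∑ h ∈ T, |(τ (star (ζ' h) * δ h)).re| + ∑ h ∈ T, |(τ (star (δ h) * ζ h)).re| :=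
          Finset.sum_add_distrib
    _ ≤ _ := by
        apply add_le_add <;> apply Finset.sum_le_sum <;> intro h _
        · have h1 : |(τ (star (ζ' h) * δ h)).re| ≤ ‖τ (star (ζ' h) * δ h)‖ :=
            Complex.abs_re_le_norm _
          have h2 := cauchy_schwarz hτ (ζ' h) (δ h)
          have h3 : ‖τ (star (ζ' h) * δ h)‖
              ≤ Real.sqrt ((τ (star (ζ' h) * ζ' h)).re) * Real.sqrt ((τ (star (δ h) * δ h)).re) := by
            have h4 : ‖τ (star (ζ' h) * δ h)‖
                = Real.sqrt (‖τ (star (ζ' h) * δ h)‖ ^ 2) :=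
              (Real.sqrt_sq (norm_nonneg _)).symm
            rw [h4, ← Real.sqrt_mul (hτ.2.1 (ζ' h)).1]
            exact Real.sqrt_le_sqrt h2
          linarith
        · have h1 : |(τ (star (δ h) * ζ h)).re| ≤ ‖τ (star (δ h) * ζ h)‖ :=
            Complex.abs_re_le_norm _
          have h2 := cauchy_schwarz hτ (δ h) (ζ h)
          have h3 : ‖τ (star (δ h) * ζ h)‖
              ≤ Real.sqrt ((τ (star (δ h) * δ h)).re) * Real.sqrt ((τ (star (ζ h) * ζ h)).re) := by
            have h4 : ‖τ (star (δ h) * ζ h)‖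
                = Real.sqrt (‖τ (star (δ h) * ζ h)‖ ^ 2) :=
              (Real.sqrt_sq (norm_nonneg _)).symm
            rw [h4, ← Real.sqrt_mul (hτ.2.1 (δ h)).1]
            exact Real.sqrt_le_sqrt h2
          linarith
  refine habs.trans ?_
  have key1 := sum_sqrt_le T (fun h => (τ (star (ζ' h) * ζ' h)).re)
    (fun h => (τ (star (δ h) * δ h)).re) (fun h _ => (hτ.2.1 _).1) (fun h _ => (hτ.2.1 _).1)
  have key2 := sum_sqrt_le T (fun h => (τ (star (δ h) * δ h)).re)
    (fun h => (τ (star (ζ h) * ζ h)).re) (fun h _ => (hτ.2.1 _).1) (fun h _ => (hτ.2.1 _).1)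
  have e1 : ∑ h ∈ T, (τ (star (ζ' h) * ζ' h)).re ≤ q τ ζ' Set.univ := by
    rw [← hqζ']
    exact q_le_univ hτ ζ' S
  have e2 : ∑ h ∈ T, (τ (star (ζ h) * ζ h)).re ≤ q τ ζ Set.univ := by
    rw [← hqζ]
    exact q_le_univ hτ ζ S
  have e3 : ∑ h ∈ T, (τ (star (δ h) * δ h)).re ≤ q τ δ Set.univ := by
    rw [← hq δ hsubδ]
    exact q_le_univ hτ δ S
  have m1 : Real.sqrt (∑ h ∈ T, (τ (star (ζ' h) * ζ' h)).re) ≤ Real.sqrt (q τ ζ' Set.univ) :=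
    Real.sqrt_le_sqrt e1
  have m2 : Real.sqrt (∑ h ∈ T, (τ (star (ζ h) * ζ h)).re) ≤ Real.sqrt (q τ ζ Set.univ) :=
    Real.sqrt_le_sqrt e2
  have m3 : Real.sqrt (∑ h ∈ T, (τ (star (δ h) * δ h)).re) ≤ Real.sqrt (q τ δ Set.univ) :=
    Real.sqrt_le_sqrt e3
  apply add_le_add
  · refine key1.trans ?_
    exact mul_le_mul m1 m3 (Real.sqrt_nonneg _) (Real.sqrt_nonneg _)
  · refine key2.trans ?_
    exact mul_le_mul m3 m2 (Real.sqrt_nonneg _) (Real.sqrt_nonneg _)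

end Dir2


namespace Dir2Main
open TrAux Dir2 Filter Topology

variable {G : Type*} [Group G] {A : Type*} [CStarAlgebra A]

lemma dir2 {τ₀ : A →ₗ[ℂ] ℂ} (hτ₀ : IsTracialState τ₀) (α : G →* (A ≃ₐ[ℂ] A))
    (hstar : ∀ (g : G) (a : A), α g (star a) = star (α g a))
    (hGinv : ∀ (g : G) (a : A), τ₀ (α g a) = τ₀ a)
    (hTA : IsTraciallyAmenable α) : AmenableGroup G := by
  classical
  have hchoice : ∀ i : Finset G × ℕ, ∃ ξ : G →₀ A, Real.sqrt ‖ip ξ ξ‖ ≤ 1 ∧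
      (∀ a ∈ (∅ : Finset A), u2l (rmul ξ a - lmul a ξ) < 1/(i.2+1)) ∧
      u2 (ip ξ ξ - 1) < 1/(i.2+1) ∧
      ∀ g ∈ i.1, u2l (diagAct α g ξ - ξ) < 1/(i.2+1) :=
    fun i => hTA ∅ i.1 (1/(i.2+1)) (by positivity)
  choose ξ h1 _h2 h3 h4 using hchoice
  set ν : Finset G × ℕ → Set G → ℝ := fun i s => q τ₀ (ξ i) s with hν
  have hipbound : ∀ i, ‖ip (ξ i) (ξ i)‖ ≤ 1 := by
    intro i
    have := h1 i
    calc ‖ip (ξ i) (ξ i)‖ = Real.sqrt ‖ip (ξ i) (ξ i)‖ * Real.sqrt ‖ip (ξ i) (ξ i)‖ :=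
        (Real.mul_self_sqrt (norm_nonneg _)).symm
    _ ≤ 1 * 1 := mul_le_mul this this (Real.sqrt_nonneg _) zero_le_one
    _ = 1 := one_mul 1
  have hν0 : ∀ i s, 0 ≤ ν i s := fun i s => q_nonneg hτ₀ (ξ i) s
  have hνuniv1 : ∀ i, ν i Set.univ ≤ 1 := by
    intro i
    rw [hν]
    simp only
    rw [q_univ hτ₀ (ξ i)]
    calc (τ₀ (ip (ξ i) (ξ i))).re ≤ ‖τ₀ (ip (ξ i) (ξ i))‖ := Complex.re_le_norm _
    _ ≤ ‖ip (ξ i) (ξ i)‖ := tr_abs_le_norm hτ₀ _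
    _ ≤ 1 := hipbound i
  have hν1 : ∀ i s, ν i s ≤ 1 := fun i s => le_trans (q_le_univ hτ₀ (ξ i) s) (hνuniv1 i)
  -- ultrafilter limit
  set U : Ultrafilter (Finset G × ℕ) := Ultrafilter.of atTop with hUdef
  have hU : ↑U ≤ (atTop : Filter (Finset G × ℕ)) := Ultrafilter.of_le _
  have hlim : ∀ s : Set G, ∃ x, x ∈ Set.Icc (0:ℝ) 1 ∧ Tendsto (fun i => ν i s) ↑U (𝓝 x) := by
    intro s
    have hc : ↑(U.map (fun i => ν i s)) ≤ Filter.principal (Set.Icc (0:ℝ) 1) := by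
      rw [Ultrafilter.coe_map, Filter.le_principal_iff]
      apply Filter.mem_map.mpr
      apply Filter.univ_mem'
      intro i
      exact ⟨hν0 i s, hν1 i s⟩
    obtain ⟨x, hx, hle⟩ := (isCompact_Icc).ultrafilter_le_nhds (U.map (fun i => ν i s)) hc
    refine ⟨x, hx, ?_⟩
    rwa [Ultrafilter.coe_map] at hle
  choose m hm1 hm2 using hlim
  -- convergence of the small parameters
  have hz : Tendsto (fun i : Finset G × ℕ => (1:ℝ)/(i.2+1)) atTop (𝓝 0) := by
    have h5 : Tendsto (Prod.snd : Finset G × ℕ → ℕ) atTop atTop := by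
      rw [← prod_atTop_atTop_eq]; exact tendsto_snd
    exact tendsto_one_div_add_atTop_nhds_zero_nat.comp h5
  refine ⟨m, fun s => (hm1 s).1, ?_, ?_, ?_⟩
  · -- m univ = 1
    have hb : ∀ i : Finset G × ℕ, |ν i Set.univ - 1| ≤ 1/(i.2+1) := by
      intro i
      have e1 : (τ₀ (ip (ξ i) (ξ i) - 1)).re = ν i Set.univ - 1 := by
        rw [map_sub, Complex.sub_re, hτ₀.1, Complex.one_re, hν]
        simp only
        rw [q_univ hτ₀ (ξ i)]
      have e2 : |ν i Set.univ - 1| ≤ ‖τ₀ (ip (ξ i) (ξ i) - 1)‖ := by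
        rw [← e1]
        exact Complex.abs_re_le_norm _
      refine e2.trans ?_
      refine (abs_le_u2 hτ₀ _).trans ?_
      exact le_of_lt (h3 i)
    have ht : Tendsto (fun i => ν i Set.univ) atTop (𝓝 1) := by
      rw [show (fun i => ν i Set.univ) = fun i => (ν i Set.univ - 1) + 1 from by
        funext i; ring]
      rw [show (𝓝 (1:ℝ)) = 𝓝 (0 + 1) by rw [zero_add]]
      apply Tendsto.add_const
      exact squeeze_zero_norm hb hz
    exact tendsto_nhds_unique (hm2 Set.univ) (ht.mono_left hU)
  · -- additivity
    intro s t hst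
    have he : (fun i => ν i (s ∪ t)) = fun i => ν i s + ν i t :=
      funext fun i => q_union hτ₀ (ξ i) s t hst
    apply tendsto_nhds_unique (hm2 (s ∪ t))
    rw [he]
    exact (hm2 s).add (hm2 t)
  · -- invariance
    intro g s
    have hb : ∀ᶠ i : Finset G × ℕ in atTop,
        |ν i ((fun k => g * k) '' s) - ν i s| ≤ 2 * (1/(i.2+1)) := by
      filter_upwards [eventually_ge_atTop (({g} : Finset G), (0:ℕ))] with i hi
      have hg : g ∈ i.1 := hi.1 (Finset.mem_singleton_self g)
      set η := diagAct α g (ξ i) with hηdef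
      have hA : q τ₀ η ((fun k => g * k) '' s) = ν i s :=
        q_diag hτ₀ α hstar hGinv g (ξ i) s
      have hAu : q τ₀ η Set.univ = q τ₀ (ξ i) Set.univ := by
        have h6 := q_diag hτ₀ α hstar hGinv g (ξ i) Set.univ
        rwa [Set.image_univ_of_surjective (fun k => ⟨g⁻¹ * k, by group⟩)] at h6
      have hB := q_diff hτ₀ η (ξ i) ((fun k => g * k) '' s)
      have hd1 : q τ₀ (ξ i - η) Set.univ = q τ₀ (η - ξ i) Set.univ := by
        rw [← neg_sub η (ξ i), q_neg]
      have hεp : (0:ℝ) < 1/(i.2+1) := by positivity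
      have hsd : Real.sqrt (q τ₀ (ξ i - η) Set.univ) ≤ 1/(i.2+1) := by
        rw [hd1, q_univ hτ₀]
        refine (le_u2l hτ₀ _).trans ?_
        exact le_of_lt (h4 i g hg)
      have hsξ : Real.sqrt (q τ₀ (ξ i) Set.univ) ≤ 1 := by
        rw [show (1:ℝ) = Real.sqrt 1 from (Real.sqrt_one).symm]
        exact Real.sqrt_le_sqrt (hνuniv1 i)
      have hsη : Real.sqrt (q τ₀ η Set.univ) ≤ 1 := by
        rw [hAu]
        exact hsξ
      have hfin : |ν i ((fun k => g * k) '' s) - ν i s|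
          ≤ Real.sqrt (q τ₀ (ξ i) Set.univ) * Real.sqrt (q τ₀ (ξ i - η) Set.univ)
            + Real.sqrt (q τ₀ (ξ i - η) Set.univ) * Real.sqrt (q τ₀ η Set.univ) := by
        rw [← hA]
        exact hB
      refine hfin.trans ?_
      have hn1 : 0 ≤ Real.sqrt (q τ₀ (ξ i - η) Set.univ) := Real.sqrt_nonneg _
      have hn2 : 0 ≤ Real.sqrt (q τ₀ (ξ i) Set.univ) := Real.sqrt_nonneg _
      have hn3 : 0 ≤ Real.sqrt (q τ₀ η Set.univ) := Real.sqrt_nonneg _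
      nlinarith [mul_le_mul hsξ hsd hn1 zero_le_one, mul_le_mul hsd hsη hn3 (le_of_lt hεp)]
    have hz2 : Tendsto (fun i : Finset G × ℕ => 2 * ((1:ℝ)/(i.2+1))) atTop (𝓝 0) := by
      have := hz.const_mul (2:ℝ)
      simpa using this
    have hsub : Tendsto (fun i => ν i ((fun k => g * k) '' s) - ν i s) atTop (𝓝 0) :=
      squeeze_zero_norm' hb hz2
    have hdiff := (hm2 ((fun k => g * k) '' s)).sub (hm2 s)
    have := tendsto_nhds_unique hdiff (hsub.mono_left hU)
    linarith

end Dir2Main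

section Main

/-- Lemma 3.9: for a tracially amenable action `α` of a discrete group
`G` on a unital C*-algebra `A` with `T(A) ≠ ∅`, the group `G` is amenable if and only
if `A` admits a `G`-invariant tracial state. -/
theorem amenable_iff_invariant_trace (α : G →* (A ≃ₐ[ℂ] A))
    (hstar : ∀ (g : G) (a : A), α g (star a) = star (α g a))
    (hT : ∃ τ : A →ₗ[ℂ] ℂ, IsTracialState τ)
    (hTA : IsTraciallyAmenable α) :
    AmenableGroup G ↔
      ∃ τ : A →ₗ[ℂ] ℂ, IsTracialState τ ∧ ∀ (g : G) (a : A), τ (α g a) = τ a := by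
  constructor
  · rintro ⟨μ, hpos, huniv, hadd, hinv⟩
    obtain ⟨τ₀, hτ₀⟩ := hT
    exact Dir1.dir1 hpos huniv hadd α hstar hτ₀ hinv
  · rintro ⟨τ₀, hτ₀, hGinv⟩
    exact Dir2Main.dir2 hτ₀ α hstar hGinv hTA
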